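/- For a connected weighted graph on n nodes with Laplacian L, maximum edge weight w_*, adjacency matrix A, and n > 2, the bound Π_ρ(L) · ‖A‖_{S_{0,1}} ≥ 2 w_*^{-1} Π_ρ(L_{K_n}) holds, where ‖A‖_{S_{0,1}} is the maximum number of nonzero entries among all rows and columns of A. -/

import Mathlib

open Matrix

lemma lap_quad {n : ℕ} (W : Matrix (Fin n) (Fin n) ℝ) (hsym : ∀ i j, W i j = W j i)
    (x : Fin n → ℝ) :
    x ⬝ᵥ ((Matrix.diagonal (fun i => ∑ j, W i j) - W) *ᵥ x)
      = (1/2) * ∑ i, ∑ j, W i j * (x i - x j)^2 := by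
  have h1 : ∑ i, ∑ j, W i j * x j ^ 2 = ∑ i, ∑ j, W i j * x i ^ 2 := by
    rw [Finset.sum_comm]
    exact Finset.sum_congr rfl fun i _ => Finset.sum_congr rfl fun j _ => by rw [hsym]
  have hL : x ⬝ᵥ ((Matrix.diagonal (fun i => ∑ j, W i j) - W) *ᵥ x)
      = ∑ i, ∑ j, (W i j * x i ^ 2 - W i j * x i * x j) := by
    simp only [dotProduct, mulVec, Matrix.sub_apply, Matrix.diagonal_apply, dotProduct]
    refine Finset.sum_congr rfl fun i _ => ?_
    have he : ∀ j, x i * (((if i = j then ∑ k, W i k else 0) - W i j) * x j)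
        = (if i = j then (∑ k, W i k) * x i * x j else 0) - W i j * x i * x j := by
      intro j; split <;> ring
    rw [Finset.mul_sum]
    simp only [he, Finset.sum_sub_distrib, Finset.sum_ite_eq, Finset.mem_univ, if_true]
    rw [Finset.sum_mul, Finset.sum_mul]
    exact congrArg₂ (· - ·) (Finset.sum_congr rfl fun j _ => by ring) rfl
  have h2 : ∑ i, ∑ j, W i j * (x i - x j)^2
      = ∑ i, ∑ j, (W i j * x i ^ 2 + W i j * x j ^ 2 - 2 * (W i j * x i * x j)) :=
    Finset.sum_congr rfl fun i _ => Finset.sum_congr rfl fun j _ => by ring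
  have hC : ∑ i : Fin n, ∑ j : Fin n, 2 * (W i j * x i * x j)
      = 2 * ∑ i : Fin n, ∑ j : Fin n, W i j * x i * x j := by
    simp only [← Finset.mul_sum]
  rw [hL, h2]
  simp only [Finset.sum_sub_distrib, Finset.sum_add_distrib]
  rw [h1, hC]
  ring

lemma lap_herm {n : ℕ} (W : Matrix (Fin n) (Fin n) ℝ) (hsym : ∀ i j, W i j = W j i) :
    (Matrix.diagonal (fun i => ∑ j, W i j) - W).IsHermitian := by
  unfold Matrix.IsHermitian
  ext i j
  simp only [conjTranspose_apply, Matrix.sub_apply, Matrix.diagonal_apply, star_sub, star_trivial]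
  by_cases h : i = j
  · subst h; simp
  · rw [if_neg h, if_neg (fun hh => h hh.symm), hsym]

lemma lap_psd {n : ℕ} (W : Matrix (Fin n) (Fin n) ℝ) (hsym : ∀ i j, W i j = W j i)
    (hnn : ∀ i j, 0 ≤ W i j) :
    (Matrix.diagonal (fun i => ∑ j, W i j) - W).PosSemidef := by
  refine .of_dotProduct_mulVec_nonneg (lap_herm W hsym) fun x => ?_
  have : star x = x := by simp
  rw [this, lap_quad W hsym x]
  have : 0 ≤ ∑ i : Fin n, ∑ j : Fin n, W i j * (x i - x j)^2 :=
    Finset.sum_nonneg fun i _ => Finset.sum_nonneg fun j _ =>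
      mul_nonneg (hnn i j) (sq_nonneg _)
  linarith

theorem tradeoff_S01 {n : ℕ} (hn : 2 < n) (α : ℝ) (hα : 0 < α)
    (ρ : Matrix (Fin n) (Fin n) ℝ → ℝ)
    (hρnonneg : ∀ M, 0 ≤ ρ M)
    (hhom : ∀ κ : ℝ, 0 < κ → ∀ M, ρ (κ • M) = κ ^ (-α) * ρ M)
    (hmono : ∀ M1 M2 : Matrix (Fin n) (Fin n) ℝ, (M1 - M2).PosSemidef → ρ M1 ≤ ρ M2)
    (wstar : ℝ) (hw : 0 < wstar)
    (A : Matrix (Fin n) (Fin n) ℝ)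
    (hAsym : Aᵀ = A) (hAnonneg : ∀ i j, 0 ≤ A i j)
    (hAdiag : ∀ i, A i i = 0) (hAbound : ∀ i j, A i j ≤ wstar)
    (L : Matrix (Fin n) (Fin n) ℝ)
    (hL : L = Matrix.diagonal (fun i => ∑ j, A i j) - A)
    (hconn : ∀ x, L.mulVec x = 0 → ∃ c : ℝ, x = fun _ => c)
    (LKn : Matrix (Fin n) (Fin n) ℝ)
    (hKn : LKn = (n : ℝ) • (1 : Matrix (Fin n) (Fin n) ℝ) - Matrix.of (fun _ _ => (1 : ℝ)))
    (S01 : ℕ)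
    (hS01 : S01 = max
      (Finset.univ.sup (fun i => (Finset.univ.filter (fun j => A i j ≠ 0)).card))
      (Finset.univ.sup (fun j => (Finset.univ.filter (fun i => A i j ≠ 0)).card))) :
    2 * wstar⁻¹ * ρ LKn ^ (1/α) ≤ ρ L ^ (1/α) * (S01 : ℝ) := by
  have hsymm : ∀ i j, A i j = A j i := fun i j => by
    conv_lhs => rw [← hAsym]
    rfl
  set e0 : Fin n := ⟨0, by omega⟩
  set e1 : Fin n := ⟨1, by omega⟩
  set e2 : Fin n := ⟨2, by omega⟩
  -- Step 1: some row has at least 2 nonzero entries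
  have hdeg2 : ∃ i, 2 ≤ (Finset.univ.filter (fun j => A i j ≠ 0)).card := by
    by_contra hcon
    push_neg at hcon
    by_cases hz : ∀ j, A e0 j = 0
    · -- isolated vertex e0
      set x : Fin n → ℝ := fun k => if k = e0 then 1 else 0 with hx
      have hLx : L.mulVec x = 0 := by
        funext i
        simp only [mulVec, dotProduct, hx, mul_ite, mul_one, mul_zero,
          Finset.sum_ite_eq', Finset.mem_univ, if_true, hL, Matrix.sub_apply,
          Matrix.diagonal_apply, Pi.zero_apply]
        by_cases h : i = e0
        · subst h; simp [hz]
        · rw [if_neg h, hsymm, hz]; ring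
      obtain ⟨c, hc⟩ := hconn x hLx
      have h1 : x e0 = c := by rw [hc]
      have h2 : x e1 = c := by rw [hc]
      have hne : e1 ≠ e0 := by simp [e0, e1, Fin.ext_iff]
      rw [hx] at h1 h2
      simp only [if_pos rfl, if_neg hne] at h1 h2
      rw [← h1] at h2; norm_num at h2
    · push_neg at hz
      obtain ⟨j0, hj0⟩ := hz
      have hj0ne : j0 ≠ e0 := fun h => hj0 (h ▸ hAdiag e0)
      have hrow0 : ∀ k, k ≠ j0 → A e0 k = 0 := by
        intro k hk
        by_contra hk0
        have hcard := hcon e0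
        have h1 : k ∈ Finset.univ.filter (fun j => A e0 j ≠ 0) := by simp [hk0]
        have h2 : j0 ∈ Finset.univ.filter (fun j => A e0 j ≠ 0) := by simp [hj0]
        have := Finset.card_le_one.mp (by omega) k h1 j0 h2
        exact hk this
      have hrowj : ∀ k, k ≠ e0 → A j0 k = 0 := by
        intro k hk
        by_contra hk0
        have hcard := hcon j0
        have h1 : k ∈ Finset.univ.filter (fun j => A j0 j ≠ 0) := by simp [hk0]
        have h2 : e0 ∈ Finset.univ.filter (fun j => A j0 j ≠ 0) := by
          simp [hsymm j0 e0, hj0]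
        have := Finset.card_le_one.mp (by omega) k h1 e0 h2
        exact hk this
      set x : Fin n → ℝ := fun k => (if k = e0 then 1 else 0) + (if k = j0 then 1 else 0)
        with hx
      have hLx : L.mulVec x = 0 := by
        funext i
        simp only [mulVec, dotProduct, hx, mul_add, mul_ite, mul_one, mul_zero,
          Finset.sum_add_distrib, Finset.sum_ite_eq', Finset.mem_univ, if_true,
          hL, Matrix.sub_apply, Matrix.diagonal_apply, Pi.zero_apply]
        have hsum0 : ∑ k, A e0 k = A e0 j0 :=
          Finset.sum_eq_single j0 (fun k _ hk => hrow0 k hk) (by simp)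
        have hsumj : ∑ k, A j0 k = A j0 e0 :=
          Finset.sum_eq_single e0 (fun k _ hk => hrowj k hk) (by simp)
        by_cases h0 : i = e0
        · subst h0
          rw [if_pos rfl, if_neg hj0ne.symm, hsum0, hAdiag]
          ring
        · by_cases hj : i = j0
          · subst hj
            rw [if_neg h0, if_pos rfl, hsumj, hAdiag]
            ring
          · rw [if_neg h0, if_neg hj, hsymm i e0, hrow0 i hj,
              hsymm i j0, hrowj i h0]
            ring
      obtain ⟨c, hc⟩ := hconn x hLx
      set k : Fin n := if j0 = e1 then e2 else e1 with hk
      have hkne0 : k ≠ e0 := by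
        rw [hk]; split <;> simp [e0, e1, e2, Fin.ext_iff]
      have hknej : k ≠ j0 := by
        rw [hk]; split
        · rename_i h; rw [h]; simp [e1, e2, Fin.ext_iff]
        · rename_i h; exact fun hh => h hh.symm
      have h1 : x e0 = c := by rw [hc]
      have h2 : x k = c := by rw [hc]
      rw [hx] at h1 h2
      simp only [if_pos rfl, if_neg hj0ne.symm, if_neg hkne0, if_neg hknej] at h1 h2
      rw [← h1] at h2; norm_num at h2
  -- Step 2: S01 ≥ 2
  obtain ⟨i2, hi2⟩ := hdeg2
  have hS2 : 2 ≤ S01 := by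
    rw [hS01]
    refine le_trans ?_ (le_max_left _ _)
    exact le_trans hi2 (Finset.le_sup (f := fun i => (Finset.univ.filter (fun j => A i j ≠ 0)).card) (Finset.mem_univ i2))
  have hS01posR : (0:ℝ) < (S01:ℝ) := by exact_mod_cast by omega
  set κ : ℝ := wstar * S01 / 2 with hκdef
  have hκpos : 0 < κ := by positivity
  have hκw : wstar ≤ κ := by
    rw [hκdef]
    have : (2:ℝ) ≤ (S01:ℝ) := by exact_mod_cast hS2
    nlinarith
  -- Step 3: κ • LKn - L is PSD
  set W : Matrix (Fin n) (Fin n) ℝ := fun i j => (if i = j then 0 else κ) - A i j with hW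
  have hWsym : ∀ i j, W i j = W j i := by
    intro i j
    simp only [hW]
    rw [hsymm]
    by_cases h : i = j
    · subst h; rfl
    · rw [if_neg h, if_neg (fun hh => h hh.symm)]
  have hWnn : ∀ i j, 0 ≤ W i j := by
    intro i j
    simp only [hW]
    by_cases h : i = j
    · subst h; rw [if_pos rfl, hAdiag]; norm_num
    · rw [if_neg h]
      have := hAbound i j
      linarith
  have hMeq : κ • LKn - L = Matrix.diagonal (fun i => ∑ j, W i j) - W := by
    have hsumW : ∀ i, ∑ j, W i j = ((n:ℝ) - 1) * κ - ∑ j, A i j := by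
      intro i
      simp only [hW]
      rw [Finset.sum_sub_distrib]
      congr 1
      have : ∑ j : Fin n, (if i = j then (0:ℝ) else κ)
          = ∑ j : Fin n, (κ - if i = j then κ else 0) := by
        refine Finset.sum_congr rfl fun j _ => ?_
        split <;> ring
      rw [this, Finset.sum_sub_distrib, Finset.sum_const, Finset.card_univ,
        Finset.sum_ite_eq, if_pos (Finset.mem_univ i)]
      simp [Fintype.card_fin]
      ring
    ext i j
    by_cases h : i = j
    · subst h
      simp only [Matrix.sub_apply, Matrix.smul_apply, hKn, hL, smul_eq_mul, one_apply,
        Matrix.diagonal_apply, of_apply, hsumW, eq_self_iff_true, if_true, hAdiag]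
      simp only [hW, eq_self_iff_true, if_true, hAdiag]
      ring
    · simp only [Matrix.sub_apply, Matrix.smul_apply, hKn, hL, smul_eq_mul, one_apply,
        Matrix.diagonal_apply, of_apply, hsumW, if_neg h]
      simp only [hW, if_neg h]
      ring
  have hpsd : (κ • LKn - L).PosSemidef := hMeq ▸ lap_psd W hWsym hWnn
  -- Step 4: apply monotonicity and homogeneity
  have hmon := hmono (κ • LKn) L hpsd
  rw [hhom κ hκpos LKn] at hmon
  -- Step 5: rpow manipulation
  have hρKn := hρnonneg LKn
  have hρL := hρnonneg L
  have hpow : (κ ^ (-α) * ρ LKn) ^ (1/α) ≤ ρ L ^ (1/α) :=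
    Real.rpow_le_rpow (mul_nonneg (Real.rpow_nonneg hκpos.le _) hρKn) hmon
      (by positivity)
  have hlhs : (κ ^ (-α) * ρ LKn) ^ (1/α) = κ⁻¹ * ρ LKn ^ (1/α) := by
    rw [Real.mul_rpow (Real.rpow_nonneg hκpos.le _) hρKn]
    congr 1
    rw [← Real.rpow_mul hκpos.le]
    have : -α * (1/α) = -1 := by field_simp
    rw [this]
    exact Real.rpow_neg_one κ
  rw [hlhs] at hpow
  have hPnn : 0 ≤ ρ LKn ^ (1/α) := Real.rpow_nonneg hρKn _
  have key : 2 * wstar⁻¹ * ρ LKn ^ (1/α) = (κ⁻¹ * ρ LKn ^ (1/α)) * (S01:ℝ) := by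
    rw [hκdef]
    field_simp
  rw [key]
  exact mul_le_mul_of_nonneg_right hpow hS01posR.le
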